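/- For two EL concept terms C and D, C is not subsumed by D if and only if there is a top-level atom D' of D such that every top-level atom C' of C satisfies C' ⋢ D'. -/
import Mathlib


inductive EL (N R : Type) : Type where
  | name : N → EL N R
  | top  : EL N R
  | conj : EL N R → EL N R → EL N R
  | ex   : R → EL N R → EL N R

structure Interp (N R : Type) where
  dom : Type
  nonempty : Nonempty dom
  cname : N → Set dom
  role : R → Set (dom × dom)

def Interp.sem {N R : Type} (I : Interp N R) : EL N R → Set I.dom
  | .name A => I.cname A
  | .top => Set.univ
  | .conj C D => I.sem C ∩ I.sem D
  | .ex r C => {x | ∃ y, (x, y) ∈ I.role r ∧ y ∈ I.sem C}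

/-- Semantic subsumption: `C ⊑ D` iff `C^I ⊆ D^I` for every interpretation `I`. -/
def Subsume {N R : Type} (C D : EL N R) : Prop :=
  ∀ I : Interp N R, I.sem C ⊆ I.sem D

/-- An atom is a concept name or an existential restriction. -/
def IsAtomEL {N R : Type} : EL N R → Prop
  | .name _ => True
  | .ex _ _ => True
  | _ => False

/-- Top-level atoms of a concept term. -/
def tla {N R : Type} : EL N R → List (EL N R)
  | .conj C D => tla C ++ tla D
  | .top => []
  | .name A => [EL.name A]
  | .ex r C => [EL.ex r C]

/-- Conjunction of a nonempty list of terms `C :: Cs` (no extra ⊤ conjunct). -/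
def conjs {N R : Type} : EL N R → List (EL N R) → EL N R
  | C, [] => C
  | C, D :: Ds => .conj C (conjs D Ds)

/-- Conjunction of a list of terms; the empty conjunction is ⊤. -/
def conjList {N R : Type} : List (EL N R) → EL N R
  | [] => .top
  | C :: Cs => conjs C Cs

/-- Symbol count: each concept name (and ⊤) is one symbol, each `∃r.` is one symbol. -/
def sizeEL {N R : Type} : EL N R → ℕ
  | .name _ => 1
  | .top => 1
  | .conj C D => sizeEL C + sizeEL D + 1
  | .ex _ C => sizeEL C + 1

/-- Groundness: no occurrence of a variable (names are `V ⊕ K`, variables on the left). -/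
def isGround {V K R : Type} : EL (V ⊕ K) R → Prop
  | .name (Sum.inl _) => False
  | .name (Sum.inr _) => True
  | .top => True
  | .conj C D => isGround C ∧ isGround D
  | .ex _ C => isGround C

/-- Application of a substitution `σ : V → EL (V ⊕ K) R` to a concept term. -/
def applySub {V K R : Type} (σ : V → EL (V ⊕ K) R) : EL (V ⊕ K) R → EL (V ⊕ K) R
  | .name (Sum.inl X) => σ X
  | .name (Sum.inr A) => .name (Sum.inr A)
  | .top => .top
  | .conj C D => .conj (applySub σ C) (applySub σ D)
  | .ex r C => .ex r (applySub σ C)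

/-- The variable `Y` occurs in the concept term. -/
def occursVar {V K R : Type} (Y : V) : EL (V ⊕ K) R → Prop
  | .name (Sum.inl X) => X = Y
  | .name (Sum.inr _) => False
  | .top => False
  | .conj C D => occursVar Y C ∨ occursVar Y D
  | .ex _ C => occursVar Y C

lemma sem_tla {N R : Type} (I : Interp N R) (E : EL N R) (x : I.dom) :
    x ∈ I.sem E ↔ ∀ a ∈ tla E, x ∈ I.sem a := by
  induction E with
  | name A => simp [tla, Interp.sem]
  | top => simp [tla, Interp.sem]
  | conj C D ihC ihD =>
      simp only [tla, List.mem_append, Interp.sem, Set.mem_inter_iff, ihC, ihD]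
      constructor
      · rintro ⟨h1, h2⟩ a (h | h); exacts [h1 a h, h2 a h]
      · intro h; exact ⟨fun a ha => h a (Or.inl ha), fun a ha => h a (Or.inr ha)⟩
  | ex r C ih => simp [tla]

lemma subsume_tla_mem {N R : Type} {E a : EL N R} (h : a ∈ tla E) : Subsume E a :=
  fun I x hx => (sem_tla I E x).1 hx a h

lemma subsume_of_tla {N R : Type} {C D : EL N R}
    (h : ∀ a ∈ tla D, Subsume C a) : Subsume C D :=
  fun I x hx => (sem_tla I D x).2 fun a ha => h a ha I hx

lemma subsume_trans {N R : Type} {C D E : EL N R}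
    (h1 : Subsume C D) (h2 : Subsume D E) : Subsume C E :=
  fun I x hx => h2 I (h1 I hx)

lemma subsume_ex_mono {N R : Type} {C D : EL N R} (r : R)
    (h : Subsume C D) : Subsume (.ex r C) (.ex r D) := by
  rintro I x ⟨y, hy, hyC⟩
  exact ⟨y, hy, h I hyC⟩

/-- Canonical interpretation: domain is the set of concept terms. -/
def canonical (N R : Type) : Interp N R where
  dom := EL N R
  nonempty := ⟨.top⟩
  cname A := {E | .name A ∈ tla E}
  role r := {p | .ex r p.2 ∈ tla p.1}

lemma canonical_self {N R : Type} :
    ∀ (G E : EL N R), (∀ a ∈ tla G, a ∈ tla E) → E ∈ (canonical N R).sem G := by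
  intro G
  induction G with
  | name A => intro E h; exact h _ (by simp [tla])
  | top => intro E h; trivial
  | conj C D ihC ihD =>
      intro E h
      exact ⟨ihC E fun a ha => h a (by simp [tla, ha]),
             ihD E fun a ha => h a (by simp [tla, ha])⟩
  | ex r C ih =>
      intro E h
      exact ⟨C, h _ (by simp [tla]), ih C fun a ha => ha⟩

lemma canonical_sound {N R : Type} :
    ∀ (G E : EL N R), E ∈ (canonical N R).sem G → Subsume E G := by
  intro G
  induction G with
  | name A => intro E h; exact subsume_tla_mem h
  | top => intro E _ I x _; trivial
  | conj C D ihC ihD =>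
      intro E h
      intro I x hx
      exact ⟨ihC E h.1 I hx, ihD E h.2 I hx⟩
  | ex r C ih =>
      rintro E ⟨F, hF, hFC⟩
      exact subsume_trans (subsume_tla_mem hF) (subsume_ex_mono r (ih F hFC))

lemma tla_shape {N R : Type} :
    ∀ (E : EL N R), ∀ a ∈ tla E, (∃ A, a = .name A) ∨ (∃ r F, a = .ex r F) := by
  intro E
  induction E with
  | name A => intro a ha; simp [tla] at ha; exact Or.inl ⟨A, ha⟩
  | top => intro a ha; simp [tla] at ha
  | conj C D ihC ihD =>
      intro a ha
      rcases List.mem_append.1 ha with h | h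
      exacts [ihC a h, ihD a h]
  | ex r C => intro a ha; simp [tla] at ha; exact Or.inr ⟨r, C, ha⟩

/-- The hard structural lemma: if `C ⊑ D'` for an atom `D'`, some top-level
atom of `C` is subsumed by `D'`. -/
lemma subsume_atom {N R : Type} {C D' : EL N R}
    (hshape : (∃ A, D' = EL.name A) ∨ (∃ r F, D' = EL.ex r F))
    (h : Subsume C D') : ∃ C' ∈ tla C, Subsume C' D' := by
  have hC : C ∈ (canonical N R).sem C := canonical_self C C fun a ha => ha
  have hCD : C ∈ (canonical N R).sem D' := h (canonical N R) hC
  rcases hshape with ⟨A, rfl⟩ | ⟨r, F, rfl⟩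
  · exact ⟨.name A, hCD, fun I x hx => hx⟩
  · rcases hCD with ⟨G, hG, hGF⟩
    exact ⟨.ex r G, hG, subsume_ex_mono r (canonical_sound F G hGF)⟩

theorem stmt2 {N R : Type} (C D : EL N R) :
    ¬ Subsume C D ↔ ∃ D' ∈ tla D, ∀ C' ∈ tla C, ¬ Subsume C' D' := by
  constructor
  · intro h
    by_contra hcon
    push_neg at hcon
    apply h
    apply subsume_of_tla
    intro D' hD'
    obtain ⟨C', hC', hsub⟩ := hcon D' hD'
    exact subsume_trans (subsume_tla_mem hC') hsub
  · rintro ⟨D', hD', hall⟩ hsub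
    have hCD' : Subsume C D' := subsume_trans hsub (subsume_tla_mem hD')
    obtain ⟨C', hC', h⟩ := subsume_atom (tla_shape D D' hD') hCD'
    exact hall C' hC' h
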